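/- Let a > 0 and 0 < z < 1, let L be the Meixner moment functional L[f] = Σ_{x=0}^{∞} f(x)·(a)_x z^x / x!, and let (P_n)_{n≥0} be a monic orthogonal polynomial sequence for L with recurrence coefficients β_n, γ_n. Then for all n ≥ 0 the structure relation z(x+a)·P_n(x+1) = γ_n P_{n−1}(x) + (1−z)(γ_{n+1} − γ_n) P_n(x) + z P_{n+1}(x) holds as an identity of polynomials (with P_{−1} = 0, γ_0 = 0). -/

import Mathlib

open Polynomial Filter

lemma aux_comp_coeff (p : Polynomial ℝ) (d : ℕ) (hp : p.natDegree ≤ d + 1) :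
    (p.comp (X + C (1:ℝ))).coeff d = p.coeff d + ((d:ℝ)+1) * p.coeff (d+1) := by
  rw [← taylor_apply, taylor_coeff]
  have h2 : (hasseDeriv d p).natDegree ≤ 1 :=
    le_trans (natDegree_hasseDeriv_le p d) (by omega)
  rw [eq_X_add_C_of_natDegree_le_one h2]
  have c0 : (hasseDeriv d p).coeff 0 = p.coeff d := by
    rw [hasseDeriv_coeff]; simp
  have c1 : (hasseDeriv d p).coeff 1 = ((d:ℝ)+1) * p.coeff (1+d) := by
    rw [hasseDeriv_coeff]
    have hc : (1 + d).choose d = d + 1 := by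
      have := Nat.choose_symm (n := 1 + d) (k := 1) (by omega)
      simp [Nat.choose_one_right] at this
      omega
    rw [hc]; push_cast; ring
  rw [c0, c1]
  simp [Nat.add_comm]
  ring


lemma aux_eval_bound (p : Polynomial ℝ) :
    ∀ x : ℕ, |p.eval (x:ℝ)| ≤ (∑ i ∈ Finset.range (p.natDegree + 1), |p.coeff i|) *
      ((x:ℝ)+1) ^ p.natDegree := by
  intro x
  rw [eval_eq_sum_range]
  refine le_trans (Finset.abs_sum_le_sum_abs _ _) ?_
  rw [Finset.sum_mul]
  refine Finset.sum_le_sum fun i hi => ?_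
  rw [abs_mul, abs_pow, Nat.abs_cast]
  refine mul_le_mul_of_nonneg_left ?_ (abs_nonneg _)
  calc (x:ℝ)^i ≤ ((x:ℝ)+1)^i := by
        refine pow_le_pow_left₀ (by positivity) (by linarith) i
    _ ≤ ((x:ℝ)+1)^p.natDegree := by
        refine pow_le_pow_right₀ (by linarith [Nat.cast_nonneg (α := ℝ) x]) ?_
        exact Nat.lt_succ_iff.mp (Finset.mem_range.mp hi)

lemma aux_summable (a z : ℝ) (ha : 0 < a) (hz0 : 0 < z) (hz1 : z < 1) (w : ℕ → ℝ)
    (hw : ∀ x : ℕ, w x = (ascPochhammer ℝ x).eval a * z ^ x / x.factorial)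
    (p : Polynomial ℝ) : Summable (fun x : ℕ => p.eval (x:ℝ) * w x) := by
  have wpos : ∀ x : ℕ, 0 < w x := by
    intro x
    rw [hw]
    have h1 := ascPochhammer_pos x a ha
    positivity
  have wratio : ∀ x : ℕ, w (x+1) = w x * (z * ((x:ℝ) + a) / ((x:ℝ)+1)) := by
    intro x
    rw [hw, hw]
    rw [Nat.factorial_succ, ascPochhammer_succ_eval]
    push_cast
    field_simp
    ring
  set d := p.natDegree with hd
  set g : ℕ → ℝ := fun x => ((x:ℝ)+1)^d * w x with hg
  have gpos : ∀ x, 0 < g x := fun x => by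
    have := wpos x; positivity
  have gsum : Summable g := by
    apply summable_of_ratio_test_tendsto_lt_one hz1
    · exact Eventually.of_forall fun x => (gpos x).ne'
    · have key : ∀ x : ℕ, ‖g (x+1)‖ / ‖g x‖ =
          (((x:ℝ)+2)/((x:ℝ)+1))^d * (z * ((x:ℝ) + a) / ((x:ℝ)+1)) := by
        intro x
        rw [Real.norm_eq_abs, Real.norm_eq_abs, abs_of_pos (gpos _), abs_of_pos (gpos _)]
        rw [hg]
        simp only
        rw [wratio x]
        have h1 : ((x:ℝ)+1) ≠ 0 := by positivity
        have h2 : w x ≠ 0 := (wpos x).ne'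
        push_cast
        rw [div_pow]
        field_simp
        ring
      rw [tendsto_congr key]
      have t1 : Tendsto (fun x : ℕ => 1/((x:ℝ)+1)) atTop (nhds 0) :=
        tendsto_one_div_add_atTop_nhds_zero_nat
      have t2 : Tendsto (fun x : ℕ => ((x:ℝ)+2)/((x:ℝ)+1)) atTop (nhds 1) := by
        have : ∀ x : ℕ, ((x:ℝ)+2)/((x:ℝ)+1) = 1 + 1/((x:ℝ)+1) := by
          intro x
          have h1 : ((x:ℝ)+1) ≠ 0 := by positivity
          field_simp
          ring
        rw [tendsto_congr this]
        simpa using tendsto_const_nhds.add t1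
      have t3 : Tendsto (fun x : ℕ => z * ((x:ℝ) + a) / ((x:ℝ)+1)) atTop (nhds z) := by
        have : ∀ x : ℕ, z * ((x:ℝ) + a) / ((x:ℝ)+1) = z * (1 + (a-1) * (1/((x:ℝ)+1))) := by
          intro x
          have h1 : ((x:ℝ)+1) ≠ 0 := by positivity
          field_simp
          ring
        rw [tendsto_congr this]
        have : Tendsto (fun x : ℕ => 1 + (a-1) * (1/((x:ℝ)+1))) atTop (nhds 1) := by
          simpa using tendsto_const_nhds.add (t1.const_mul (a-1))
        simpa using this.const_mul z
      have := (t2.pow d).mul t3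
      simpa using this
  set B := ∑ i ∈ Finset.range (d + 1), |p.coeff i| with hB
  refine Summable.of_norm_bounded (gsum.mul_left B) ?_
  intro x
  rw [Real.norm_eq_abs, abs_mul, abs_of_pos (wpos x)]
  calc |p.eval (x:ℝ)| * w x ≤ (B * ((x:ℝ)+1)^d) * w x :=
        mul_le_mul_of_nonneg_right (aux_eval_bound p x) (wpos x).le
    _ = B * g x := by rw [hg]; ring


lemma aux_wratio (a z : ℝ) (w : ℕ → ℝ)
    (hw : ∀ x : ℕ, w x = (ascPochhammer ℝ x).eval a * z ^ x / x.factorial) (x : ℕ) :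
    w (x+1) = w x * (z * ((x:ℝ) + a) / ((x:ℝ)+1)) := by
  rw [hw, hw, Nat.factorial_succ, ascPochhammer_succ_eval]
  push_cast
  field_simp
  ring

theorem meixner_structure_relation_forward
    (a z : ℝ) (ha : 0 < a) (hz0 : 0 < z) (hz1 : z < 1)
    (w : ℕ → ℝ)
    (hw : ∀ x : ℕ, w x = (ascPochhammer ℝ x).eval a * z ^ x / x.factorial)
    (P : ℕ → Polynomial ℝ) (h : ℕ → ℝ)
    (hmonic : ∀ n, (P n).Monic) (hdeg : ∀ n, (P n).natDegree = n)
    (hh : ∀ n, h n ≠ 0)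
    (horth : ∀ n m : ℕ,
      (∑' x : ℕ, (P n * P m).eval (x : ℝ) * w x) = if n = m then h n else 0)
    (β γ : ℕ → ℝ) (hγ0 : γ 0 = 0)
    (hrec : ∀ n : ℕ, X * P n = P (n + 1) + C (β n) * P n + C (γ n) * P (n - 1)) :
    ∀ n : ℕ,
      C z * (X + C a) * (P n).comp (X + 1) =
        C (γ n) * P (n - 1) + C ((1 - z) * (γ (n + 1) - γ n)) * P n
          + C z * P (n + 1) := by
  have hsum : ∀ p : Polynomial ℝ, Summable (fun x : ℕ => p.eval (x:ℝ) * w x) :=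
    aux_summable a z ha hz0 hz1 w hw
  set L : Polynomial ℝ → ℝ := fun p => ∑' x : ℕ, p.eval (x:ℝ) * w x with hLdef
  have horth' : ∀ n m : ℕ, L (P n * P m) = if n = m then h n else 0 := by
    intro n m
    simp only [hLdef]
    exact horth n m
  have L_add : ∀ p q : Polynomial ℝ, L (p + q) = L p + L q := by
    intro p q
    simp only [hLdef]
    rw [← Summable.tsum_add (hsum p) (hsum q)]
    exact tsum_congr fun x => by simp [add_mul]
  have L_sub : ∀ p q : Polynomial ℝ, L (p - q) = L p - L q := by
    intro p q
    simp only [hLdef]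
    rw [← Summable.tsum_sub (hsum p) (hsum q)]
    exact tsum_congr fun x => by simp [sub_mul]
  have L_C : ∀ (u : ℝ) (p : Polynomial ℝ), L (C u * p) = u * L p := by
    intro u p
    simp only [hLdef]
    rw [← tsum_mul_left]
    exact tsum_congr fun x => by simp [mul_assoc]
  have L_zero : L 0 = 0 := by simp [hLdef]
  have L_finsum : ∀ (s : Finset ℕ) (F : ℕ → Polynomial ℝ),
      L (∑ k ∈ s, F k) = ∑ k ∈ s, L (F k) := by
    intro s F
    induction s using Finset.cons_induction with
    | empty => simpa using L_zero
    | cons i s hi ih => rw [Finset.sum_cons, Finset.sum_cons, L_add, ih]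
  have L_shift : ∀ r : Polynomial ℝ, L (C z * (X + C a) * r.comp (X + C 1)) = L (X * r) := by
    intro r
    have hf := hsum (X * r)
    simp only [hLdef]
    rw [Summable.tsum_eq_zero_add hf]
    have h0 : (X * r).eval ((0:ℕ):ℝ) * w 0 = 0 := by simp
    rw [h0, zero_add]
    refine (tsum_congr fun x => ?_).symm
    have hwr := aux_wratio a z w hw x
    have hx1 : ((x:ℝ)+1) ≠ 0 := by positivity
    simp only [eval_mul, eval_add, eval_X, eval_C, eval_comp]
    rw [hwr]
    push_cast
    field_simp
  have hP0 : P 0 = 1 := by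
    have h1 := hmonic 0
    have h2 := hdeg 0
    rw [Polynomial.eq_C_of_natDegree_eq_zero h2]
    have : (P 0).coeff 0 = 1 := by
      have := h1.coeff_natDegree
      rwa [h2] at this
    rw [this, map_one]
  have hcoefftop : ∀ m : ℕ, (P m).coeff m = 1 := by
    intro m
    have := (hmonic m).coeff_natDegree
    rwa [hdeg m] at this
  have span : ∀ N : ℕ, ∀ q : Polynomial ℝ, q.natDegree ≤ N →
      ∃ d : ℕ → ℝ, q = ∑ k ∈ Finset.range (N+1), C (d k) * P k := by
    intro N
    induction N with
    | zero =>
      intro q hq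
      refine ⟨fun _ => q.coeff 0, ?_⟩
      simp [hP0]
      exact Polynomial.eq_C_of_natDegree_le_zero hq
    | succ N ih =>
      intro q hq
      have hq' : (q - C (q.coeff (N+1)) * P (N+1)).natDegree ≤ N := by
        rw [Polynomial.natDegree_le_iff_coeff_eq_zero]
        intro m hm
        rw [Polynomial.coeff_sub, Polynomial.coeff_C_mul]
        rcases eq_or_lt_of_le (Nat.succ_le_of_lt hm) with hc | hc
        · rw [← hc, hcoefftop (N+1), mul_one, sub_self]
        · have h1 : q.coeff m = 0 :=
            Polynomial.coeff_eq_zero_of_natDegree_lt (lt_of_le_of_lt hq hc)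
          have h2 : (P (N+1)).coeff m = 0 :=
            Polynomial.coeff_eq_zero_of_natDegree_lt (by rw [hdeg]; omega)
          rw [h1, h2, mul_zero, sub_self]
      obtain ⟨d, hd⟩ := ih _ hq'
      refine ⟨Function.update d (N+1) (q.coeff (N+1)), ?_⟩
      rw [Finset.sum_range_succ, Function.update_self]
      have he : ∑ k ∈ Finset.range (N+1), C (Function.update d (N+1) (q.coeff (N+1)) k) * P k
          = ∑ k ∈ Finset.range (N+1), C (d k) * P k := by
        refine Finset.sum_congr rfl fun k hk => ?_
        rw [Function.update_of_ne (by have := Finset.mem_range.mp hk; omega)]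
      rw [he, ← hd]
      ring
  have L_expand : ∀ (N : ℕ) (d : ℕ → ℝ) (j : ℕ), j ≤ N →
      L (P j * ∑ k ∈ Finset.range (N+1), C (d k) * P k) = d j * h j := by
    intro N d j hj
    have he : P j * ∑ k ∈ Finset.range (N+1), C (d k) * P k
        = ∑ k ∈ Finset.range (N+1), C (d k) * (P j * P k) := by
      rw [Finset.mul_sum]
      exact Finset.sum_congr rfl fun k _ => by ring
    rw [he, L_finsum]
    have he2 : ∀ k ∈ Finset.range (N+1), L (C (d k) * (P j * P k))
        = if j = k then d k * h j else 0 := by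
      intro k _
      rw [L_C, horth']
      split_ifs <;> simp
    rw [Finset.sum_congr rfl he2]
    rw [Finset.sum_ite_eq (Finset.range (N+1)) j (fun k => d k * h j)]
    rw [if_pos (Finset.mem_range.mpr (by omega))]
  have coeff_expand : ∀ (N : ℕ) (d : ℕ → ℝ) (j : ℕ), j ≤ N →
      (∑ k ∈ Finset.range (N+1), C (d k) * P k).coeff j
        = ∑ k ∈ Finset.range (N+1), d k * (P k).coeff j := by
    intro N d j _
    rw [Polynomial.finset_sum_coeff]
    exact Finset.sum_congr rfl fun k _ => by rw [Polynomial.coeff_C_mul]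
  have KO : ∀ (k : ℕ) (q : Polynomial ℝ), q.natDegree ≤ k →
      L (P k * q) = q.coeff k * h k := by
    intro k q hq
    obtain ⟨d, hd⟩ := span k q hq
    have hL : L (P k * q) = d k * h k := by
      conv_lhs => rw [hd]
      exact L_expand k d k le_rfl
    have hck : q.coeff k = d k := by
      conv_lhs => rw [hd]
      rw [coeff_expand k d k le_rfl]
      rw [Finset.sum_eq_single k]
      · rw [hcoefftop, mul_one]
      · intro i hi hik
        rw [Polynomial.coeff_eq_zero_of_natDegree_lt
          (by rw [hdeg]; have := Finset.mem_range.mp hi; omega), mul_zero]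
      · intro hk; exact absurd (Finset.mem_range.mpr (by omega)) hk
    rw [hL, hck]
  have KO2 : ∀ (k : ℕ) (q : Polynomial ℝ), q.natDegree ≤ k + 1 →
      L (P k * q) = (q.coeff k - q.coeff (k+1) * (P (k+1)).coeff k) * h k := by
    intro k q hq
    obtain ⟨d, hd⟩ := span (k+1) q hq
    have hL : L (P k * q) = d k * h k := by
      conv_lhs => rw [hd]
      exact L_expand (k+1) d k (by omega)
    have hck1 : q.coeff (k+1) = d (k+1) := by
      conv_lhs => rw [hd]
      rw [coeff_expand (k+1) d (k+1) le_rfl]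
      rw [Finset.sum_eq_single (k+1)]
      · rw [hcoefftop, mul_one]
      · intro i hi hik
        rw [Polynomial.coeff_eq_zero_of_natDegree_lt
          (by rw [hdeg]; have := Finset.mem_range.mp hi; omega), mul_zero]
      · intro hk; exact absurd (Finset.mem_range.mpr (by omega)) hk
    have hck : q.coeff k = d k + d (k+1) * (P (k+1)).coeff k := by
      conv_lhs => rw [hd]
      rw [coeff_expand (k+1) d k (by omega)]
      rw [Finset.sum_range_succ]
      congr 1
      rw [Finset.sum_eq_single k]
      · rw [hcoefftop, mul_one]
      · intro i hi hik
        rw [Polynomial.coeff_eq_zero_of_natDegree_lt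
          (by rw [hdeg]; have := Finset.mem_range.mp hi; omega), mul_zero]
      · intro hk; exact absurd (Finset.mem_range.mpr (by omega)) hk
    rw [hL, hck, hck1]
    ring
  have ZERO : ∀ (N : ℕ) (q : Polynomial ℝ), q.natDegree ≤ N →
      (∀ k, k ≤ N → L (P k * q) = 0) → q = 0 := by
    intro N q hq hk
    obtain ⟨d, hd⟩ := span N q hq
    have hdz : ∀ j, j ≤ N → d j = 0 := by
      intro j hj
      have h1 := hk j hj
      conv_lhs at h1 => rw [hd]
      rw [L_expand N d j hj] at h1
      rcases mul_eq_zero.mp h1 with h2 | h2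
      · exact h2
      · exact absurd h2 (hh j)
    rw [hd]
    refine Finset.sum_eq_zero fun i hi => ?_
    rw [hdz i (by have := Finset.mem_range.mp hi; omega), map_zero, zero_mul]
  have LCP : ∀ (u : ℝ) (p q : Polynomial ℝ), L (p * (C u * q)) = u * L (p * q) := by
    intro u p q
    rw [show p * (C u * q) = C u * (p * q) by ring, L_C]
  have hhrel : ∀ n : ℕ, h (n+1) = γ (n+1) * h n := by
    intro n
    have e1 : L (P (n+1) * (X * P n)) = h (n+1) := by
      rw [hrec n, mul_add, mul_add, L_add, L_add, LCP, LCP, horth', horth', horth']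
      rw [if_pos rfl, if_neg (by omega), if_neg (by omega)]
      ring
    have e2 : L (P n * (X * P (n+1))) = γ (n+1) * h n := by
      rw [hrec (n+1), Nat.add_sub_cancel, mul_add, mul_add, L_add, L_add, LCP, LCP,
        horth', horth', horth']
      rw [if_neg (by omega), if_neg (by omega), if_pos rfl]
      ring
    rw [← e1, show P (n+1) * (X * P n) = P n * (X * P (n+1)) by ring, e2]
  set c : ℕ → ℝ := fun n => z * ((n:ℝ) + a + β n) with hc
  set Q : ℕ → Polynomial ℝ := fun m => C z * (X + C a) * (P m).comp (X + C 1) with hQ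
  have dcomp : ∀ m : ℕ, ((P m).comp (X + C (1:ℝ))).natDegree = m := by
    intro m
    rw [natDegree_comp, natDegree_X_add_C, hdeg, mul_one]
  have mcomp : ∀ m : ℕ, ((P m).comp (X + C (1:ℝ))).Monic :=
    fun m => (hmonic m).comp_X_add_C 1
  have ccomp : ∀ m : ℕ, ((P m).comp (X + C (1:ℝ))).coeff m = 1 := by
    intro m
    have := (mcomp m).coeff_natDegree
    rwa [dcomp m] at this
  have LPPc : ∀ m : ℕ, L (P m * (P m).comp (X + C 1)) = h m := by
    intro m
    rw [KO m _ (le_of_eq (dcomp m)), ccomp, one_mul]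
  have LP1c : ∀ m : ℕ, L (P m * (P (m+1)).comp (X + C 1)) = ((m:ℝ)+1) * h m := by
    intro m
    rw [KO2 m _ (le_of_eq (dcomp (m+1)))]
    rw [aux_comp_coeff (P (m+1)) m (le_of_eq (hdeg (m+1))), ccomp, hcoefftop]
    ring
  have Lgterm : ∀ n : ℕ, γ n * L (P n * (P (n-1)).comp (X + C 1)) = 0 := by
    intro n
    cases n with
    | zero => rw [hγ0, zero_mul]
    | succ m =>
      have : L (P (m+1) * (P ((m+1)-1)).comp (X + C 1)) = 0 := by
        rw [Nat.add_sub_cancel, KO (m+1) _ (by rw [dcomp]; omega)]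
        rw [Polynomial.coeff_eq_zero_of_natDegree_lt (by rw [dcomp]; omega), zero_mul]
      rw [this, mul_zero]
  have QLn : ∀ n : ℕ, L (P n * Q n) = c n * h n := by
    intro n
    have hsplit : P n * Q n
        = C z * (P n * (P (n+1)).comp (X + C 1))
          + C (z * β n) * (P n * (P n).comp (X + C 1))
          + C (z * γ n) * (P n * (P (n-1)).comp (X + C 1))
          + C (z * (a-1)) * (P n * (P n).comp (X + C 1)) := by
      rw [hQ]
      simp only
      rw [show C z * (X + C a) * (P n).comp (X + C 1)
          = C z * ((X * P n).comp (X + C 1)) + C (z * (a-1)) * (P n).comp (X + C 1) by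
        rw [mul_comp, X_comp]
        rw [show C (z * (a-1)) = C z * C (a-1) from by rw [← C_mul]]
        rw [show (C a : Polynomial ℝ) = C 1 + C (a-1) by rw [← C_add]; congr 1; ring]
        ring]
      rw [hrec n]
      simp only [add_comp, mul_comp, C_comp]
      rw [show C (z * β n) = C z * C (β n) from by rw [← C_mul],
        show C (z * γ n) = C z * C (γ n) from by rw [← C_mul]]
      ring
    rw [hsplit, L_add, L_add, L_add, L_C, L_C, L_C, L_C, LPPc, LP1c]
    have : z * γ n * L (P n * (P (n-1)).comp (X + C 1)) = 0 := by
      rw [mul_assoc, Lgterm, mul_zero]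
    rw [this, hc]
    simp only
    ring
  have QLtop : ∀ n : ℕ, L (P (n+1) * Q n) = z * h (n+1) := by
    intro n
    have hM : ((X + C a) * (P n).comp (X + C 1)).natDegree = n + 1 := by
      rw [natDegree_mul (X_add_C_ne_zero a) (mcomp n).ne_zero, natDegree_X_add_C, dcomp]
      omega
    have hMm : ((X + C a) * (P n).comp (X + C 1)).Monic :=
      (monic_X_add_C a).mul (mcomp n)
    have hQn : Q n = C z * ((X + C a) * (P n).comp (X + C 1)) := by
      rw [hQ]; simp only; ring
    rw [hQn, KO (n+1) _ ?_]
    · rw [Polynomial.coeff_C_mul]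
      have : ((X + C a) * (P n).comp (X + C 1)).coeff (n+1) = 1 := by
        have := hMm.coeff_natDegree
        rwa [hM] at this
      rw [this, mul_one]
    · refine le_trans (natDegree_mul_le) ?_
      rw [natDegree_C, hM]
      omega
  have QLlow : ∀ n k : ℕ, k < n → L (P k * Q n) = if k = n - 1 then h n else 0 := by
    intro n k hkn
    have harg : P k * Q n
        = C z * (X + C a) * ((P n * (P k).comp (X + C (-1))).comp (X + C 1)) := by
      rw [hQ]
      simp only
      rw [mul_comp, Polynomial.comp_assoc]
      have hco : (X + C (-1:ℝ)).comp (X + C 1) = X := by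
        rw [add_comp, X_comp, C_comp]
        rw [show (X + C (1:ℝ)) + C (-1) = X + (C 1 + C (-1)) by ring, ← C_add]
        norm_num
      rw [hco, Polynomial.comp_X]
      ring
    rw [harg, L_shift]
    rw [show X * (P n * (P k).comp (X + C (-1))) = P n * (X * (P k).comp (X + C (-1))) by ring]
    have hsm : ((P k).comp (X + C (-1:ℝ))).Monic := (hmonic k).comp_X_add_C (-1)
    have hsd : ((P k).comp (X + C (-1:ℝ))).natDegree = k := by
      rw [natDegree_comp, natDegree_X_add_C, hdeg, mul_one]
    have hqm : (X * (P k).comp (X + C (-1:ℝ))).Monic := monic_X.mul hsm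
    have hqd : (X * (P k).comp (X + C (-1:ℝ))).natDegree = 1 + k := by
      rw [natDegree_mul X_ne_zero hsm.ne_zero, natDegree_X, hsd]
    rw [KO n _ (by omega)]
    by_cases hk : k = n - 1
    · have hn1 : 1 + k = n := by omega
      have : (X * (P k).comp (X + C (-1:ℝ))).coeff n = 1 := by
        have := hqm.coeff_natDegree
        rwa [hqd, hn1] at this
      rw [this, one_mul, if_pos hk]
    · have : (X * (P k).comp (X + C (-1:ℝ))).coeff n = 0 :=
        Polynomial.coeff_eq_zero_of_natDegree_lt (by omega)
      rw [this, zero_mul, if_neg hk]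
  have R : ∀ n : ℕ, Q n = C z * P (n+1) + C (c n) * P n + C (γ n) * P (n-1) := by
    intro n
    have hdQ : (Q n).natDegree ≤ n + 1 := by
      rw [hQ]
      simp only
      refine le_trans natDegree_mul_le ?_
      refine le_trans (add_le_add natDegree_mul_le (le_of_eq (dcomp n))) ?_
      rw [natDegree_C, natDegree_X_add_C]
      omega
    have hdR : (C z * P (n+1) + C (c n) * P n + C (γ n) * P (n-1)).natDegree ≤ n + 1 := by
      refine le_trans (natDegree_add_le _ _) ?_
      refine max_le (le_trans (natDegree_add_le _ _) ?_) ?_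
      · refine max_le (le_trans natDegree_mul_le ?_) (le_trans natDegree_mul_le ?_) <;>
          rw [natDegree_C, hdeg] <;> omega
      · refine le_trans natDegree_mul_le ?_
        rw [natDegree_C, hdeg]
        omega
    have hE : Q n - (C z * P (n+1) + C (c n) * P n + C (γ n) * P (n-1)) = 0 := by
      refine ZERO (n+1) _ (le_trans (natDegree_sub_le _ _) (max_le hdQ hdR)) ?_
      intro k hk
      rw [show P k * (Q n - (C z * P (n+1) + C (c n) * P n + C (γ n) * P (n-1)))
        = P k * Q n - P k * (C z * P (n+1) + C (c n) * P n + C (γ n) * P (n-1)) by ring, L_sub]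
      have hRHS : L (P k * (C z * P (n+1) + C (c n) * P n + C (γ n) * P (n-1)))
          = z * (if k = n+1 then h k else 0) + c n * (if k = n then h k else 0)
            + γ n * (if k = n-1 then h k else 0) := by
        rw [mul_add, mul_add, L_add, L_add, LCP, LCP, LCP, horth', horth', horth']
      rw [hRHS]
      by_cases hk1 : k = n+1
      · subst hk1
        rw [QLtop, if_pos rfl, if_neg (by omega), if_neg (by omega)]
        ring
      by_cases hk2 : k = n
      · subst hk2
        rw [QLn, if_neg (by omega), if_pos rfl]
        have hlast : γ k * (if k = k - 1 then h k else 0) = 0 := by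
          cases k with
          | zero => rw [hγ0, zero_mul]
          | succ m => rw [if_neg (by omega), mul_zero]
        rw [hlast]
        ring
      · have hkn : k < n := by omega
        rw [QLlow n k hkn, if_neg hk1, if_neg hk2]
        by_cases hk3 : k = n - 1
        · have hn1 : n = (n-1) + 1 := by omega
          rw [if_pos hk3, if_pos hk3]
          have := hhrel (n-1)
          rw [← hn1] at this
          rw [this, hk3]
          ring
        · rw [if_neg hk3, if_neg hk3]
          ring
    have := sub_eq_zero.mp hE
    exact this
  have KI : ∀ n : ℕ, Q (n+1) + C (β n) * Q n + C (γ n) * Q (n-1) = (X + 1) * Q n := by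
    intro n
    have hM : C z * (X + C a) * ((X * P n).comp (X + C 1)) = (X + 1) * Q n := by
      rw [hQ]
      simp only
      rw [mul_comp, X_comp, C_1]
      ring
    rw [← hM, hrec n]
    simp only [add_comp, mul_comp, C_comp]
    rw [hQ]
    simp only
    ring
  have hgR : ∀ n : ℕ, C (γ n) * Q (n-1)
      = C (γ n) * (C z * P n + C (c (n-1)) * P (n-1) + C (γ (n-1)) * P (n-1-1)) := by
    intro n
    cases n with
    | zero => rw [hγ0, map_zero, zero_mul, zero_mul]
    | succ m => rw [Nat.add_sub_cancel, R m]
  have hgrec : ∀ n : ℕ, C (γ n) * (X * P (n-1))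
      = C (γ n) * (P n + C (β (n-1)) * P (n-1) + C (γ (n-1)) * P (n-1-1)) := by
    intro n
    cases n with
    | zero => rw [hγ0, map_zero, zero_mul, zero_mul]
    | succ m => rw [Nat.add_sub_cancel, hrec m]
  have SC : ∀ n : ℕ, c n = (1 - z) * (γ (n+1) - γ n) := by
    intro n
    have k1 := KI n
    have r1 := R (n+1)
    rw [Nat.add_sub_cancel] at r1
    have r0 := R n
    have g1 := hgR n
    have d1 := hrec (n+1)
    rw [Nat.add_sub_cancel] at d1
    have d0 := hrec n
    have f1 := hgrec n
    have PE0 : (C (c (n+1)) + C (β n) * C z - C z - C z * C (β (n+1)) - C (c n)) * P (n+1)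
        + (C (γ (n+1)) + C (β n) * C (c n) + C (γ n) * C z - C z * C (γ (n+1))
            - C (c n) * C (β n) - C (γ n) - C (c n)) * P n
        + (C (β n) * C (γ n) + C (γ n) * C (c (n-1)) - C (c n) * C (γ n)
            - C (γ n) * C (β (n-1)) - C (γ n)) * P (n-1) = 0 := by
      linear_combination k1 - r1 - C (β n) * r0 - g1 + (X + 1) * r0
        + C z * d1 + C (c n) * d0 + f1
    simp only [← C_mul, ← C_sub, ← C_add] at PE0
    have happ := congrArg (fun q => L (P n * q)) PE0
    simp only [mul_zero, L_zero, mul_add, L_add, LCP, horth'] at happ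
    simp only [if_true] at happ
    rw [if_neg (show ¬n = n+1 by omega)] at happ
    have hE3 : (β n * γ n + γ n * c (n-1) - c n * γ n - γ n * β (n-1) - γ n)
        * (if n = n - 1 then h n else 0) = 0 := by
      cases n with
      | zero => rw [hγ0]; ring
      | succ m => rw [if_neg (by omega), mul_zero]
    rw [hE3] at happ
    have hE2 : (γ (n+1) + β n * c n + γ n * z - z * γ (n+1) - c n * β n - γ n - c n) * h n
        = 0 := by linarith [happ]
    have hE2' := (mul_eq_zero.mp hE2).resolve_right (hh n)
    linear_combination -hE2'
  intro n
  rw [show (X + 1 : Polynomial ℝ) = X + C 1 by rw [C_1]]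
  have hRn := R n
  rw [hQ] at hRn
  simp only at hRn
  rw [hRn, ← SC n]
  ring
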